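/- Let T be a finite tree with Hermitian edge weights (a_{uv} = conj(a_{vu}), all nonzero on edges) and real vertex potential b, and let A_T be the associated Jacobi matrix acting by (A_T η)(u) = b_u η(u) + Σ_{v ~ u} a_{uv} η(v). If λ ∈ ℝ and there exists η ∈ Ker(λ - A_T) with η(v) ≠ 0 for every vertex v of T, then dim Ker(λ - A_T) = 1. -/

import Mathlib

set_option linter.unusedVariables false

open SimpleGraph

/-- The branch of `u` seen from the edge `uv`: vertices reachable from `u` after
deleting the edge. -/
private def branch {V : Type*} (G : SimpleGraph V) (u v : V) : Set V :=
  {x | (G \ fromEdgeSet {s(u, v)}).Reachable x u}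

private lemma branch_ssubset {V : Type*} [DecidableEq V] {G : SimpleGraph V} (hT : G.IsTree)
    {u v w : V} (huv : G.Adj u v) (huw : G.Adj u w) (hwv : w ≠ v) :
    branch G w u ⊂ branch G u v := by
  have hbridge : ∀ ⦃a b : V⦄, G.Adj a b → G.IsBridge s(a, b) :=
    isAcyclic_iff_forall_adj_isBridge.mp hT.IsAcyclic
  have hwu : ¬ (G \ fromEdgeSet {s(w, u)}).Reachable w u :=
    isBridge_iff.mp (hbridge huw.symm)
  constructor
  · rintro x ⟨p⟩
    -- p : (G \ fromEdgeSet {s(w,u)}).Walk x w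
    by_cases hu : u ∈ p.support
    · exact absurd ((p.dropUntil u hu).reverse.reachable) hwu
    · -- transfer p to G \ fromEdgeSet {s(u,v)}
      have hG2 : ∀ e ∈ p.edges, e ∈ (G \ fromEdgeSet {s(u, v)}).edgeSet := by
        intro e he
        have heG : e ∈ G.edgeSet := edgeSet_mono sdiff_le (p.edges_subset_edgeSet he)
        have hne : e ≠ s(u, v) := by
          rintro rfl
          exact hu (p.fst_mem_support_of_mem_edges he)
        simp only [edgeSet_sdiff, edgeSet_fromEdgeSet, edgeSet_sdiff_sdiff_isDiag,
          Set.mem_diff, Set.mem_singleton_iff]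
        exact ⟨heG, hne⟩
      have q := p.transfer _ hG2
      have hadj : (G \ fromEdgeSet {s(u, v)}).Adj w u := by
        refine ⟨huw.symm, fun hf => ?_⟩
        rw [fromEdgeSet_adj, Set.mem_singleton_iff, Sym2.eq_iff] at hf
        rcases hf with ⟨(⟨h1, h2⟩ | ⟨h1, h2⟩), -⟩
        · exact G.irrefl (h1 ▸ huw)
        · exact hwv h1
      exact ⟨q.append (hadj.toWalk)⟩
  · intro hsub
    have hu1 : u ∈ branch G u v := ⟨Walk.nil⟩
    have hu2 : u ∉ branch G w u := fun h => hwu (h.symm)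
    exact hu2 (hsub hu1)

private lemma branch_key {V : Type*} [Fintype V] [DecidableEq V] {G : SimpleGraph V} (hT : G.IsTree)
    (A : Matrix V V ℂ)
    (hsupp : ∀ u v : V, u ≠ v → ¬ G.Adj u v → A u v = 0)
    (hnz : ∀ u v : V, G.Adj u v → A u v ≠ 0)
    (lam : ℂ) (η ξ : V → ℂ)
    (hη : ∀ u, ∑ x, A u x * η x = lam * η u)
    (hξ : ∀ u, ∑ x, A u x * ξ x = lam * ξ u) :
    ∀ n : ℕ, ∀ u v : V, G.Adj u v → (branch G u v).ncard ≤ n →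
      ξ v * η u = η v * ξ u := by
  intro n
  induction n using Nat.strong_induction_on with
  | _ n ih =>
    intro u v huv hcard
    classical
    have E : ∑ x, A u x * (ξ x * η u - η x * ξ u) = 0 := by
      calc ∑ x, A u x * (ξ x * η u - η x * ξ u)
          = (∑ x, A u x * ξ x) * η u - (∑ x, A u x * η x) * ξ u := by
            rw [Finset.sum_mul, Finset.sum_mul, ← Finset.sum_sub_distrib]
            exact Finset.sum_congr rfl fun x _ => by ring
        _ = lam * ξ u * η u - lam * η u * ξ u := by rw [hξ u, hη u]
        _ = 0 := by ring
    rw [Finset.sum_eq_single v] at E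
    · have := hnz u v huv
      rcases mul_eq_zero.mp E with h | h
      · exact absurd h this
      · exact sub_eq_zero.mp h
    · intro b _ hbv
      by_cases hbu : b = u
      · subst hbu; ring
      · by_cases hadj : G.Adj u b
        · have hlt : (branch G b u).ncard < n :=
            lt_of_lt_of_le (Set.ncard_lt_ncard (branch_ssubset hT huv hadj hbv)
              (Set.toFinite _)) hcard
          have := ih _ hlt b u hadj.symm le_rfl
          rw [show ξ b * η u - η b * ξ u = -(ξ u * η b - η u * ξ b) by ring]
          rw [this]; ring
        · rw [hsupp u b (Ne.symm hbu) hadj]; ring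
    · intro h; exact absurd (Finset.mem_univ v) h

private lemma ratio_const {V : Type*} [Fintype V] [DecidableEq V] {G : SimpleGraph V}
    (hT : G.IsTree) (A : Matrix V V ℂ)
    (hsupp : ∀ u v : V, u ≠ v → ¬ G.Adj u v → A u v = 0)
    (hnz : ∀ u v : V, G.Adj u v → A u v ≠ 0)
    (lam : ℂ) (η ξ : V → ℂ)
    (hη : ∀ u, ∑ x, A u x * η x = lam * η u)
    (hξ : ∀ u, ∑ x, A u x * ξ x = lam * ξ u)
    (hηnz : ∀ v : V, η v ≠ 0) :
    ∀ u v : V, ξ u * η v = ξ v * η u := by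
  have hadjcase : ∀ u v : V, G.Adj u v → ξ u * η v = ξ v * η u := by
    intro u v huv
    have := branch_key hT A hsupp hnz lam η ξ hη hξ ((branch G v u).ncard) v u huv.symm le_rfl
    linear_combination this
  intro u v
  obtain ⟨p⟩ := hT.isConnected u v
  induction p with
  | nil => rfl
  | @cons a b c h p ih =>
    have h1 := hadjcase a b h
    apply mul_right_cancel₀ (hηnz b)
    linear_combination η c * h1 + η a * ih

/-- If a finite tree with Hermitian edge weights (nonzero on edges) and real
potential has a nowhere-vanishing eigenvector for the eigenvalue `lam`, then the
corresponding eigenspace is one-dimensional. -/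
theorem stmt_0 {V : Type*} [Fintype V] [DecidableEq V] (G : SimpleGraph V)
    (hT : G.IsTree) (A : Matrix V V ℂ) (hHerm : A.IsHermitian)
    (hsupp : ∀ u v : V, u ≠ v → ¬ G.Adj u v → A u v = 0)
    (hnz : ∀ u v : V, G.Adj u v → A u v ≠ 0)
    (lam : ℝ) (η : V → ℂ) (hη : A.mulVec η = (lam : ℂ) • η)
    (hηnz : ∀ v : V, η v ≠ 0) :
    Module.finrank ℂ
      ↥(LinearMap.ker
        ((lam : ℂ) • (LinearMap.id : (V → ℂ) →ₗ[ℂ] (V → ℂ)) - Matrix.toLin' A)) = 1 := by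
  obtain ⟨r⟩ := hT.isConnected.nonempty
  have hηsum : ∀ u, ∑ x, A u x * η x = (lam : ℂ) * η u := by
    intro u
    have := congrFun hη u
    simpa [Matrix.mulVec, dotProduct] using this
  have hker : LinearMap.ker
      ((lam : ℂ) • (LinearMap.id : (V → ℂ) →ₗ[ℂ] (V → ℂ)) - Matrix.toLin' A)
      = Submodule.span ℂ {η} := by
    apply le_antisymm
    · intro ξ hmem
      rw [LinearMap.mem_ker, LinearMap.sub_apply, LinearMap.smul_apply, LinearMap.id_apply,
        Matrix.toLin'_apply, sub_eq_zero] at hmem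
      have hξsum : ∀ u, ∑ x, A u x * ξ x = (lam : ℂ) * ξ u := by
        intro u
        have := congrFun hmem.symm u
        simpa [Matrix.mulVec, dotProduct] using this
      have hratio := ratio_const hT A hsupp hnz (lam : ℂ) η ξ hηsum hξsum hηnz
      rw [Submodule.mem_span_singleton]
      refine ⟨ξ r * (η r)⁻¹, funext fun u => ?_⟩
      have h1 := hratio u r
      rw [Pi.smul_apply, smul_eq_mul]
      apply mul_right_cancel₀ (hηnz r)
      have hinv : (η r)⁻¹ * η r = 1 := inv_mul_cancel₀ (hηnz r)
      linear_combination ξ r * η u * hinv - h1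
    · rw [Submodule.span_le, Set.singleton_subset_iff]
      rw [SetLike.mem_coe, LinearMap.mem_ker, LinearMap.sub_apply, LinearMap.smul_apply,
        LinearMap.id_apply, Matrix.toLin'_apply, hη, sub_self]
  rw [hker]
  exact finrank_span_singleton (fun h => hηnz r (by rw [h]; rfl))
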